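/- Let λ ≥ 0, λ(z) ≥ 0 in R^m and g ∈ R^m. Then ⟨λ(z) - λ, g⟩ ≤ ‖λ(z) - λ‖ · dist(g, N_{R_+^m}(λ)). -/

import Mathlib

open scoped RealInnerProductSpace

/-- The normal cone of the nonnegative orthant `ℝ₊^m` at a point `lam ≥ 0`. -/
def nonnegOrthantNormalCone {m : ℕ} (lam : EuclideanSpace ℝ (Fin m)) :
    Set (EuclideanSpace ℝ (Fin m)) :=
  {w | ∀ i, w i ≤ 0 ∧ (0 < lam i → w i = 0)}

/-- `⟨λ(z) - λ, g⟩ ≤ ‖λ(z) - λ‖ · dist(g, N_{ℝ₊^m}(λ))` for `λ, λ(z) ≥ 0`. -/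
theorem inner_le_norm_mul_dist_normal_cone
    {m : ℕ} (lam lamz g : EuclideanSpace ℝ (Fin m))
    (hlam : ∀ i, 0 ≤ lam i) (hlamz : ∀ i, 0 ≤ lamz i) :
    ⟪lamz - lam, g⟫ ≤ ‖lamz - lam‖ * Metric.infDist g (nonnegOrthantNormalCone lam) := by
  classical
  have hne : (nonnegOrthantNormalCone lam).Nonempty := ⟨0, fun i => ⟨le_refl 0, fun _ => rfl⟩⟩
  -- For any v in the cone, ⟪lamz - lam, v⟫ ≤ 0
  have key : ∀ v ∈ nonnegOrthantNormalCone lam,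
      ⟪lamz - lam, g⟫ ≤ ‖lamz - lam‖ * dist g v := by
    intro v hv
    have hinner_v : ⟪lamz - lam, v⟫ ≤ 0 := by
      rw [PiLp.inner_apply]
      apply Finset.sum_nonpos
      intro i _
      simp only [RCLike.inner_apply, conj_trivial]
      by_cases h : 0 < lam i
      · simp [(hv i).2 h]
      · have hlam0 : lam i = 0 := le_antisymm (not_lt.1 h) (hlam i)
        have h1 : 0 ≤ (lamz - lam) i := by simp [hlam0]; exact hlamz i
        exact (mul_comm _ _).trans_le (mul_nonpos_of_nonneg_of_nonpos h1 (hv i).1)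
    calc ⟪lamz - lam, g⟫ = ⟪lamz - lam, g - v⟫ + ⟪lamz - lam, v⟫ := by
          rw [← inner_add_right, sub_add_cancel]
      _ ≤ ⟪lamz - lam, g - v⟫ := by linarith
      _ ≤ ‖lamz - lam‖ * ‖g - v‖ := real_inner_le_norm _ _
      _ = ‖lamz - lam‖ * dist g v := by rw [dist_eq_norm]
  rcases eq_or_lt_of_le (norm_nonneg (lamz - lam)) with h0 | hpos
  · have : lamz - lam = 0 := by
      rw [← norm_eq_zero]; exact h0.symm
    simp [this]
  · rw [mul_comm, ← div_le_iff₀ hpos] at *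
    rw [Metric.infDist_eq_iInf]
    have : Nonempty (nonnegOrthantNormalCone lam) := hne.to_subtype
    apply le_ciInf
    intro v
    rw [div_le_iff₀ hpos, mul_comm]
    exact key v v.2
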